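/- Let $F_1$ be a field elementarily equivalent to $\mathbb{Q}$ (in the language of rings). Then the set of sums of four squares in $F_1$ is the positive cone of an ordering on $F_1$, and this is the unique ordering of $F_1$. -/

import Mathlib

open FirstOrder

/-- Two rings are elementarily equivalent in the language of rings. -/
def RingElemEquiv (F₁ : Type*) (F₂ : Type*) [Ring F₁] [Ring F₂] : Prop :=
  letI := Ring.compatibleRingOfRing F₁
  letI := Ring.compatibleRingOfRing F₂
  F₁ ≅[Language.ring] F₂

/-- `P` is the positive cone of a (field) ordering on `F`. -/
def IsOrderingCone {F : Type*} [Field F] (P : Set F) : Prop :=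
  (∀ x ∈ P, ∀ y ∈ P, x + y ∈ P) ∧ (∀ x ∈ P, ∀ y ∈ P, x * y ∈ P) ∧
    (∀ x : F, x ∈ P ∨ -x ∈ P) ∧ (∀ x : F, x ∈ P → -x ∈ P → x = 0)

namespace Stmt10Aux

open FirstOrder Language Ring

/-- sum of four squares of variables -/
noncomputable def p4 {α : Type*} (f : Fin 4 → α) : FreeCommRing α :=
  FreeCommRing.of (f 0) ^ 2 + FreeCommRing.of (f 1) ^ 2 +
    FreeCommRing.of (f 2) ^ 2 + FreeCommRing.of (f 3) ^ 2

/-- sentence: a sum of 8 squares is a sum of 4 squares -/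
noncomputable def phiAdd : Language.ring.Sentence :=
  Formula.iAlls (Fin 8) (Formula.relabel (fun i : Fin 8 => (Sum.inr i : Empty ⊕ Fin 8))
    (Formula.iExs (Fin 4)
      (Term.equal
        (termOfFreeCommRing (p4 (fun j => Sum.inl (![0,1,2,3] j)) +
          p4 (fun j => Sum.inl (![4,5,6,7] j))))
        (termOfFreeCommRing (p4 Sum.inr)))))

/-- sentence: every element or its negation is a sum of 4 squares -/
noncomputable def phiTot : Language.ring.Sentence :=
  Formula.iAlls Unit (Formula.relabel (fun i : Unit => (Sum.inr i : Empty ⊕ Unit))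
    ((Formula.iExs (Fin 4)
      (Term.equal (termOfFreeCommRing (FreeCommRing.of (Sum.inl ())))
        (termOfFreeCommRing (p4 Sum.inr)))) ⊔
     (Formula.iExs (Fin 4)
      (Term.equal (termOfFreeCommRing (-FreeCommRing.of (Sum.inl ())))
        (termOfFreeCommRing (p4 Sum.inr))))))

/-- sentence: if a sum of 8 squares is 0 then the first four squares sum to 0 -/
noncomputable def phiZero : Language.ring.Sentence :=
  Formula.iAlls (Fin 8) (Formula.relabel (fun i : Fin 8 => (Sum.inr i : Empty ⊕ Fin 8))
    ((Term.equal
        (termOfFreeCommRing (p4 (fun j => ![0,1,2,3] j) +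
          p4 (fun j => (![4,5,6,7] j : Fin 8))))
        (termOfFreeCommRing 0)).imp
      (Term.equal (termOfFreeCommRing (p4 ((fun j => ![0,1,2,3] j) : Fin 4 → Fin 8)))
        (termOfFreeCommRing 0))))

variable {R : Type*} [CommRing R] [CompatibleRing R]

theorem realize_phiAdd : R ⊨ phiAdd ↔
    ∀ v : Fin 8 → R, ∃ w : Fin 4 → R,
      (v 0 ^ 2 + v 1 ^ 2 + v 2 ^ 2 + v 3 ^ 2) + (v 4 ^ 2 + v 5 ^ 2 + v 6 ^ 2 + v 7 ^ 2) =
        w 0 ^ 2 + w 1 ^ 2 + w 2 ^ 2 + w 3 ^ 2 := by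
  simp [phiAdd, Sentence.Realize, Formula.realize_iAlls, Formula.realize_iExs,
    Formula.realize_equal, p4, map_add, map_pow, Formula.realize_relabel]

theorem realize_phiTot : R ⊨ phiTot ↔
    ∀ x : R, (∃ w : Fin 4 → R, x = w 0 ^ 2 + w 1 ^ 2 + w 2 ^ 2 + w 3 ^ 2) ∨
      (∃ w : Fin 4 → R, -x = w 0 ^ 2 + w 1 ^ 2 + w 2 ^ 2 + w 3 ^ 2) := by
  simp only [phiTot, Sentence.Realize, Formula.realize_iAlls, Formula.realize_sup,
    Formula.realize_iExs, Formula.realize_equal, realize_termOfFreeCommRing,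
    map_add, map_pow, map_neg, FreeCommRing.lift_of, Sum.elim_inl, Sum.elim_inr, id_eq, p4, Formula.realize_relabel, Function.comp_def]
  constructor
  · intro h x
    simpa using h (fun _ => x)
  · intro h i
    simpa using h (i ())

theorem realize_phiZero : R ⊨ phiZero ↔
    ∀ v : Fin 8 → R,
      (v 0 ^ 2 + v 1 ^ 2 + v 2 ^ 2 + v 3 ^ 2) + (v 4 ^ 2 + v 5 ^ 2 + v 6 ^ 2 + v 7 ^ 2) = 0 →
        v 0 ^ 2 + v 1 ^ 2 + v 2 ^ 2 + v 3 ^ 2 = 0 := by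
  simp [phiZero, Sentence.Realize, Formula.realize_iAlls, Formula.realize_imp,
    Formula.realize_equal, p4, map_add, map_pow, Formula.realize_relabel]

/-- every nonnegative rational is a sum of four rational squares -/
theorem rat_sum_four_squares {q : ℚ} (hq : 0 ≤ q) :
    ∃ a b c d : ℚ, q = a ^ 2 + b ^ 2 + c ^ 2 + d ^ 2 := by
  obtain ⟨a, b, c, d, habcd⟩ := Nat.sum_four_squares (q.num * q.den).toNat
  have hd : (q.den : ℚ) ≠ 0 := by exact_mod_cast q.den_ne_zero
  refine ⟨a / q.den, b / q.den, c / q.den, d / q.den, ?_⟩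
  have hnum : (0:ℤ) ≤ q.num := Rat.num_nonneg.2 hq
  have h1 : ((a:ℤ) ^ 2 + b ^ 2 + c ^ 2 + d ^ 2) = q.num * q.den := by
    have := congrArg (Nat.cast : ℕ → ℤ) habcd
    push_cast at this
    rw [this, Int.toNat_of_nonneg (mul_nonneg hnum (Int.natCast_nonneg _))]
  have h2 : ((a:ℚ) ^ 2 + b ^ 2 + c ^ 2 + d ^ 2) = (q.num : ℚ) * q.den := by
    exact_mod_cast congrArg (Int.cast : ℤ → ℚ) h1
  rw [div_pow, div_pow, div_pow, div_pow, ← add_div, ← add_div,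
    ← add_div, h2, pow_two, ← div_div, mul_div_assoc, div_self hd, mul_one,
    Rat.num_div_den]

end Stmt10Aux

open Stmt10Aux in
/-- In a field elementarily equivalent to `ℚ`, the set of sums of four squares is the positive
cone of an ordering, and this ordering is unique. -/
theorem stmt_10 {F₁ : Type*} [Field F₁] (h₁ : RingElemEquiv F₁ ℚ) :
    IsOrderingCone {x : F₁ | ∃ a b c d : F₁, x = a ^ 2 + b ^ 2 + c ^ 2 + d ^ 2} ∧
      ∀ P : Set F₁, IsOrderingCone P →
        P = {x : F₁ | ∃ a b c d : F₁, x = a ^ 2 + b ^ 2 + c ^ 2 + d ^ 2} := by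
  letI := Ring.compatibleRingOfRing F₁
  letI := Ring.compatibleRingOfRing ℚ
  unfold RingElemEquiv at h₁
  set S : Set F₁ := {x : F₁ | ∃ a b c d : F₁, x = a ^ 2 + b ^ 2 + c ^ 2 + d ^ 2} with hS
  -- transfer the three sentences
  have hAddQ : (ℚ : Type) ⊨ phiAdd := by
    rw [realize_phiAdd]
    intro v
    obtain ⟨a, b, c, d, h⟩ := rat_sum_four_squares (q := (v 0 ^ 2 + v 1 ^ 2 + v 2 ^ 2 + v 3 ^ 2) +
      (v 4 ^ 2 + v 5 ^ 2 + v 6 ^ 2 + v 7 ^ 2)) (by positivity)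
    exact ⟨![a, b, c, d], by simpa using h⟩
  have hTotQ : (ℚ : Type) ⊨ phiTot := by
    rw [realize_phiTot]
    intro x
    rcases le_total 0 x with h | h
    · obtain ⟨a, b, c, d, h⟩ := rat_sum_four_squares h
      exact Or.inl ⟨![a, b, c, d], by simpa using h⟩
    · obtain ⟨a, b, c, d, h⟩ := rat_sum_four_squares (neg_nonneg.2 h)
      exact Or.inr ⟨![a, b, c, d], by simpa using h⟩
  have hZeroQ : (ℚ : Type) ⊨ phiZero := by
    rw [realize_phiZero]
    intro v h
    nlinarith [sq_nonneg (v 0), sq_nonneg (v 1), sq_nonneg (v 2), sq_nonneg (v 3),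
      sq_nonneg (v 4), sq_nonneg (v 5), sq_nonneg (v 6), sq_nonneg (v 7)]
  have hAdd := (realize_phiAdd (R := F₁)).1 ((h₁.realize_sentence phiAdd).2 hAddQ)
  have hTot := (realize_phiTot (R := F₁)).1 ((h₁.realize_sentence phiTot).2 hTotQ)
  have hZero := (realize_phiZero (R := F₁)).1 ((h₁.realize_sentence phiZero).2 hZeroQ)
  -- basic facts about S
  have hmemS : ∀ a b c d : F₁, a ^ 2 + b ^ 2 + c ^ 2 + d ^ 2 ∈ S :=
    fun a b c d => ⟨a, b, c, d, rfl⟩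
  have hSadd : ∀ x ∈ S, ∀ y ∈ S, x + y ∈ S := by
    rintro x ⟨a, b, c, d, rfl⟩ y ⟨e, f, g, h, rfl⟩
    obtain ⟨w, hw⟩ := hAdd ![a, b, c, d, e, f, g, h]
    simp only [show (![a,b,c,d,e,f,g,h] : Fin 8 → F₁) 0 = a from rfl,
      show (![a,b,c,d,e,f,g,h] : Fin 8 → F₁) 1 = b from rfl,
      show (![a,b,c,d,e,f,g,h] : Fin 8 → F₁) 2 = c from rfl,
      show (![a,b,c,d,e,f,g,h] : Fin 8 → F₁) 3 = d from rfl,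
      show (![a,b,c,d,e,f,g,h] : Fin 8 → F₁) 4 = e from rfl,
      show (![a,b,c,d,e,f,g,h] : Fin 8 → F₁) 5 = f from rfl,
      show (![a,b,c,d,e,f,g,h] : Fin 8 → F₁) 6 = g from rfl,
      show (![a,b,c,d,e,f,g,h] : Fin 8 → F₁) 7 = h from rfl] at hw
    exact ⟨w 0, w 1, w 2, w 3, hw⟩
  have hSmul : ∀ x ∈ S, ∀ y ∈ S, x * y ∈ S := by
    rintro x ⟨a, b, c, d, rfl⟩ y ⟨e, f, g, h, rfl⟩
    refine ⟨a*e - b*f - c*g - d*h, a*f + b*e + c*h - d*g,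
      a*g - b*h + c*e + d*f, a*h + b*g - c*f + d*e, by ring⟩
  have hStot : ∀ x : F₁, x ∈ S ∨ -x ∈ S := by
    intro x
    rcases hTot x with ⟨w, hw⟩ | ⟨w, hw⟩
    · exact Or.inl ⟨w 0, w 1, w 2, w 3, hw⟩
    · exact Or.inr ⟨w 0, w 1, w 2, w 3, hw⟩
  have hSzero : ∀ x : F₁, x ∈ S → -x ∈ S → x = 0 := by
    rintro x ⟨a, b, c, d, rfl⟩ hneg
    obtain ⟨e, f, g, h, hefgh⟩ := hneg
    have h8 : (a ^ 2 + b ^ 2 + c ^ 2 + d ^ 2) + (e ^ 2 + f ^ 2 + g ^ 2 + h ^ 2) = 0 := by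
      rw [← hefgh]; ring
    have h9 := hZero ![a, b, c, d, e, f, g, h]
    simp only [show (![a,b,c,d,e,f,g,h] : Fin 8 → F₁) 0 = a from rfl,
      show (![a,b,c,d,e,f,g,h] : Fin 8 → F₁) 1 = b from rfl,
      show (![a,b,c,d,e,f,g,h] : Fin 8 → F₁) 2 = c from rfl,
      show (![a,b,c,d,e,f,g,h] : Fin 8 → F₁) 3 = d from rfl,
      show (![a,b,c,d,e,f,g,h] : Fin 8 → F₁) 4 = e from rfl,
      show (![a,b,c,d,e,f,g,h] : Fin 8 → F₁) 5 = f from rfl,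
      show (![a,b,c,d,e,f,g,h] : Fin 8 → F₁) 6 = g from rfl,
      show (![a,b,c,d,e,f,g,h] : Fin 8 → F₁) 7 = h from rfl] at h9
    exact h9 h8
  refine ⟨⟨hSadd, hSmul, hStot, hSzero⟩, ?_⟩
  -- uniqueness
  rintro P ⟨hPadd, hPmul, hPtot, hPzero⟩
  have hsq : ∀ x : F₁, x ^ 2 ∈ P := by
    intro x
    rcases hPtot x with h | h
    · simpa [sq] using hPmul x h x h
    · simpa [sq] using hPmul (-x) h (-x) h
  have hSP : S ⊆ P := by
    rintro x ⟨a, b, c, d, rfl⟩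
    exact hPadd _ (hPadd _ (hPadd _ (hsq a) _ (hsq b)) _ (hsq c)) _ (hsq d)
  apply Set.Subset.antisymm _ hSP
  intro x hx
  rcases hStot x with h | h
  · exact h
  · have hxP : -x ∈ P := hSP h
    have : x = 0 := hPzero x hx hxP
    rw [this]
    exact ⟨0, 0, 0, 0, by ring⟩
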